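/- Let p ≥ 1 and let Ω ⊂ ℝ^d be a Borel set. For all finite positive measures μ, λ on Ω with μ(Ω) = λ(Ω) > 0 and finite p-th moments, W_p(μ, λ) ≤ 2^{-1/p}( W_p(μ, λ) + W_p(μ + λ, 2λ) ); consequently W_p(μ, λ) ≤ (2^{1/p} / (2^{1/p} - 1)) W_p(μ + λ, 2λ). -/

import Mathlib

open MeasureTheory ENNReal

/-- Transportation cost of order `p`: infimum over couplings. -/
noncomputable def Wcost {X : Type*} [MeasurableSpace X] [PseudoMetricSpace X]
    (p : ℝ) (μ ν : Measure X) : ℝ≥0∞ :=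
  sInf { c | ∃ π : Measure (X × X), π.map Prod.fst = μ ∧ π.map Prod.snd = ν ∧
      c = ∫⁻ z, ENNReal.ofReal (dist z.1 z.2 ^ p) ∂π }

/-- Wasserstein distance of order `p`. -/
noncomputable def Wdist {X : Type*} [MeasurableSpace X] [PseudoMetricSpace X]
    (p : ℝ) (μ ν : Measure X) : ℝ≥0∞ := (Wcost p μ ν) ^ (1 / p)

section Helpers

open ProbabilityTheory

lemma le_sInf_add_sInf {S T : Set ℝ≥0∞} {x : ℝ≥0∞}
    (h : ∀ a ∈ S, ∀ b ∈ T, x ≤ a + b) : x ≤ sInf S + sInf T := by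
  rw [ENNReal.sInf_add]
  refine le_iInf₂ fun a ha => ?_
  rw [add_comm, ENNReal.sInf_add]
  refine le_iInf₂ fun b hb => ?_
  rw [add_comm]
  exact h a ha b hb

variable {X : Type*} [MeasurableSpace X] [PseudoMetricSpace X] [SecondCountableTopology X] [OpensMeasurableSpace X]
set_option linter.unusedSectionVars false

lemma measurable_wcost_fn (p : ℝ) (hp : 0 ≤ p) :
    Measurable fun z : X × X => ENNReal.ofReal (dist z.1 z.2 ^ p) :=
  (continuous_dist.rpow_const fun _ => Or.inr hp).measurable.ennreal_ofReal

lemma Wcost_le_coupling (p : ℝ) {μ ν : Measure X} (π : Measure (X × X))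
    (h1 : π.map Prod.fst = μ) (h2 : π.map Prod.snd = ν) :
    Wcost p μ ν ≤ ∫⁻ z, ENNReal.ofReal (dist z.1 z.2 ^ p) ∂π :=
  sInf_le ⟨π, h1, h2, rfl⟩

lemma Wcost_self (p : ℝ) (hp : 0 < p) (μ : Measure X) : Wcost p μ μ = 0 := by
  refine le_antisymm ?_ zero_le
  have hdiag : Measurable fun x : X => (x, x) := measurable_id.prodMk measurable_id
  have h := Wcost_le_coupling p (μ := μ) (ν := μ) (μ.map fun x => (x, x)) ?_ ?_
  · refine le_trans h (le_of_eq ?_)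
    rw [lintegral_map (measurable_wcost_fn p hp.le) hdiag]
    simp [Real.zero_rpow hp.ne']
  · rw [Measure.map_map measurable_fst hdiag]
    exact Measure.map_id
  · rw [Measure.map_map measurable_snd hdiag]
    exact Measure.map_id

lemma Wcost_add_le (p : ℝ) (μ₁ μ₂ ν₁ ν₂ : Measure X) :
    Wcost p (μ₁ + μ₂) (ν₁ + ν₂) ≤ Wcost p μ₁ ν₁ + Wcost p μ₂ ν₂ := by
  apply le_sInf_add_sInf
  rintro a ⟨π₁, h11, h12, rfl⟩ b ⟨π₂, h21, h22, rfl⟩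
  refine sInf_le ⟨π₁ + π₂, ?_, ?_, ?_⟩
  · rw [Measure.map_add _ _ measurable_fst, h11, h21]
  · rw [Measure.map_add _ _ measurable_snd, h12, h22]
  · rw [lintegral_add_measure]

lemma le_Wcost_smul (p : ℝ) (c : ℝ≥0∞) (hc0 : c ≠ 0) (hct : c ≠ ∞) (μ ν : Measure X) :
    c * Wcost p μ ν ≤ Wcost p (c • μ) (c • ν) := by
  refine le_sInf ?_
  rintro b ⟨π, h1, h2, rfl⟩
  have h1' : (c⁻¹ • π).map Prod.fst = μ := by
    rw [Measure.map_smul, h1, smul_smul, ENNReal.inv_mul_cancel hc0 hct, one_smul]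
  have h2' : (c⁻¹ • π).map Prod.snd = ν := by
    rw [Measure.map_smul, h2, smul_smul, ENNReal.inv_mul_cancel hc0 hct, one_smul]
  have h := Wcost_le_coupling p (c⁻¹ • π) h1' h2'
  rw [lintegral_smul_measure] at h
  calc c * Wcost p μ ν ≤ c * (c⁻¹ * ∫⁻ z, ENNReal.ofReal (dist z.1 z.2 ^ p) ∂π) :=
        mul_le_mul_right h c
    _ = ∫⁻ z, ENNReal.ofReal (dist z.1 z.2 ^ p) ∂π := by
        rw [← mul_assoc, ENNReal.mul_inv_cancel hc0 hct, one_mul]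

section Triangle

variable [StandardBorelSpace X] [Nonempty X]

lemma ennreal_rpow_sInf {S : Set ℝ≥0∞} {r : ℝ} (hr : 0 < r) :
    (sInf S) ^ r = sInf ((fun x => x ^ r) '' S) := by
  have hcoe : ⇑(ENNReal.orderIsoRpow r hr) = fun x : ℝ≥0∞ => x ^ r := by
    ext x; simp [ENNReal.orderIsoRpow_apply]
  have h := (ENNReal.orderIsoRpow r hr).map_sInf S
  rw [hcoe] at h
  rw [sInf_image]
  simpa using h

lemma Wdist_le_coupling_add (p : ℝ) (hp : 1 ≤ p) {μ κ ν : Measure X}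
    [IsFiniteMeasure μ] [IsFiniteMeasure κ]
    {π₁ π₂ : Measure (X × X)}
    (h11 : π₁.map Prod.fst = μ) (h12 : π₁.map Prod.snd = κ)
    (h21 : π₂.map Prod.fst = κ) (h22 : π₂.map Prod.snd = ν) :
    Wdist p μ ν ≤ (∫⁻ z, ENNReal.ofReal (dist z.1 z.2 ^ p) ∂π₁) ^ (1/p)
      + (∫⁻ z, ENNReal.ofReal (dist z.1 z.2 ^ p) ∂π₂) ^ (1/p) := by
  have hp0 : (0:ℝ) < p := lt_of_lt_of_le one_pos hp
  have h1p : (0:ℝ) ≤ 1/p := by positivity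
  have hπ₁fin : IsFiniteMeasure π₁ := by
    constructor
    have : π₁ Set.univ = μ Set.univ := by
      rw [← h11, Measure.map_apply measurable_fst MeasurableSet.univ, Set.preimage_univ]
    rw [this]; exact measure_lt_top μ _
  have hπ₂fin : IsFiniteMeasure π₂ := by
    constructor
    have : π₂ Set.univ = κ Set.univ := by
      rw [← h21, Measure.map_apply measurable_fst MeasurableSet.univ, Set.preimage_univ]
    rw [this]; exact measure_lt_top κ _
  set ρ₁ := π₁.map Prod.swap with hρ₁def
  have hρ₁fin : IsFiniteMeasure ρ₁ := by
    constructor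
    rw [hρ₁def, Measure.map_apply measurable_swap MeasurableSet.univ, Set.preimage_univ]
    exact measure_lt_top π₁ _
  have hρ₁fst : ρ₁.fst = κ := by
    show ρ₁.map Prod.fst = κ
    rw [hρ₁def, Measure.map_map measurable_fst measurable_swap]
    exact h12
  have hπ₂fst : π₂.fst = κ := h21
  set K₁ := ρ₁.condKernel with hK₁def
  set K₂ := π₂.condKernel with hK₂def
  have hK₁ : κ ⊗ₘ K₁ = ρ₁ := by
    rw [← hρ₁fst, hK₁def]; exact ρ₁.disintegrate ρ₁.condKernel
  have hK₂ : κ ⊗ₘ K₂ = π₂ := by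
    rw [← hπ₂fst, hK₂def]; exact π₂.disintegrate π₂.condKernel
  set m := κ ⊗ₘ (K₁ ×ₖ K₂) with hmdef
  have hg₁ : Measurable fun z : X × X × X => (z.1, z.2.1) :=
    measurable_fst.prodMk (measurable_fst.comp measurable_snd)
  have hg₂ : Measurable fun z : X × X × X => (z.1, z.2.2) :=
    measurable_fst.prodMk (measurable_snd.comp measurable_snd)
  have hmap1 : m.map (fun z : X × X × X => (z.1, z.2.1)) = ρ₁ := by
    rw [← hK₁]
    ext s hs
    rw [Measure.map_apply hg₁ hs, hmdef, Measure.compProd_apply (hg₁ hs),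
      Measure.compProd_apply hs]
    refine lintegral_congr fun a => ?_
    have hset : (Prod.mk a ⁻¹' ((fun z : X × X × X => (z.1, z.2.1)) ⁻¹' s))
        = {q : X × X | q.1 ∈ Prod.mk a ⁻¹' s} := rfl
    rw [hset, ← Kernel.fst_apply' _ _ (measurable_prodMk_left hs), Kernel.fst_prod]
  have hmap2 : m.map (fun z : X × X × X => (z.1, z.2.2)) = π₂ := by
    rw [← hK₂]
    ext s hs
    rw [Measure.map_apply hg₂ hs, hmdef, Measure.compProd_apply (hg₂ hs),
      Measure.compProd_apply hs]
    refine lintegral_congr fun a => ?_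
    have hset : (Prod.mk a ⁻¹' ((fun z : X × X × X => (z.1, z.2.2)) ⁻¹' s))
        = Prod.snd ⁻¹' (Prod.mk a ⁻¹' s) := rfl
    rw [hset, ← Kernel.snd_apply' _ _ (measurable_prodMk_left hs), Kernel.snd_prod]
  -- the glued coupling
  have hπfst : (m.map fun z : X × X × X => z.2).map Prod.fst = μ := by
    rw [Measure.map_map measurable_fst measurable_snd]
    have he : (Prod.fst ∘ fun z : X × X × X => z.2)
        = (Prod.snd ∘ fun z : X × X × X => (z.1, z.2.1)) := rfl
    rw [he, ← Measure.map_map measurable_snd hg₁, hmap1, hρ₁def,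
      Measure.map_map measurable_snd measurable_swap]
    exact h11
  have hπsnd : (m.map fun z : X × X × X => z.2).map Prod.snd = ν := by
    rw [Measure.map_map measurable_snd measurable_snd]
    have he : (Prod.snd ∘ fun z : X × X × X => z.2)
        = (Prod.snd ∘ fun z : X × X × X => (z.1, z.2.2)) := rfl
    rw [he, ← Measure.map_map measurable_snd hg₂, hmap2]
    exact h22
  -- cost estimate
  set F := fun z : X × X × X => ENNReal.ofReal (dist z.2.1 z.1) with hFdef
  set G := fun z : X × X × X => ENNReal.ofReal (dist z.1 z.2.2) with hGdef
  have hFmeas : Measurable F :=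
    (continuous_dist.comp (((continuous_fst.comp continuous_snd).prodMk
      continuous_fst))).measurable.ennreal_ofReal
  have hGmeas : Measurable G :=
    (continuous_dist.comp ((continuous_fst.prodMk
      (continuous_snd.comp continuous_snd)))).measurable.ennreal_ofReal
  have hcost : ∫⁻ z, ENNReal.ofReal (dist z.1 z.2 ^ p) ∂(m.map fun z : X × X × X => z.2)
      = ∫⁻ z, ENNReal.ofReal (dist z.2.1 z.2.2 ^ p) ∂m := by
    rw [lintegral_map (measurable_wcost_fn p hp0.le) measurable_snd]
  have hpt : ∀ z : X × X × X,
      ENNReal.ofReal (dist z.2.1 z.2.2 ^ p) ≤ ((F + G) z) ^ p := by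
    intro z
    rw [← ENNReal.ofReal_rpow_of_nonneg dist_nonneg hp0.le]
    refine ENNReal.rpow_le_rpow ?_ hp0.le
    calc ENNReal.ofReal (dist z.2.1 z.2.2)
        ≤ ENNReal.ofReal (dist z.2.1 z.1 + dist z.1 z.2.2) :=
          ENNReal.ofReal_le_ofReal (dist_triangle _ _ _)
      _ = (F + G) z := by
          rw [ENNReal.ofReal_add dist_nonneg dist_nonneg]; rfl
  have hFint : ∫⁻ z, F z ^ p ∂m = ∫⁻ z, ENNReal.ofReal (dist z.1 z.2 ^ p) ∂π₁ := by
    have h1 : (fun z : X × X × X => F z ^ p)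
        = fun z : X × X × X => ENNReal.ofReal (dist z.2.1 z.1 ^ p) := by
      funext z
      show ENNReal.ofReal (dist z.2.1 z.1) ^ p = _
      exact ENNReal.ofReal_rpow_of_nonneg dist_nonneg hp0.le
    rw [h1]
    have hH : Measurable fun w : X × X => ENNReal.ofReal (dist w.2 w.1 ^ p) :=
      (measurable_wcost_fn p hp0.le).comp measurable_swap
    have h2 : ∫⁻ z, ENNReal.ofReal (dist z.2.1 z.1 ^ p) ∂m
        = ∫⁻ w, ENNReal.ofReal (dist w.2 w.1 ^ p)
            ∂(m.map fun z : X × X × X => (z.1, z.2.1)) := by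
      rw [lintegral_map hH hg₁]
    rw [h2, hmap1, hρ₁def, lintegral_map hH measurable_swap]
    rfl
  have hGint : ∫⁻ z, G z ^ p ∂m = ∫⁻ z, ENNReal.ofReal (dist z.1 z.2 ^ p) ∂π₂ := by
    have h1 : (fun z : X × X × X => G z ^ p)
        = fun z : X × X × X => ENNReal.ofReal (dist z.1 z.2.2 ^ p) := by
      funext z
      show ENNReal.ofReal (dist z.1 z.2.2) ^ p = _
      exact ENNReal.ofReal_rpow_of_nonneg dist_nonneg hp0.le
    rw [h1]
    have h2 : ∫⁻ z, ENNReal.ofReal (dist z.1 z.2.2 ^ p) ∂m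
        = ∫⁻ w, ENNReal.ofReal (dist w.1 w.2 ^ p)
            ∂(m.map fun z : X × X × X => (z.1, z.2.2)) := by
      rw [lintegral_map (measurable_wcost_fn p hp0.le) hg₂]
    rw [h2, hmap2]
  calc Wdist p μ ν
      ≤ (∫⁻ z, ENNReal.ofReal (dist z.1 z.2 ^ p) ∂(m.map fun z : X × X × X => z.2)) ^ (1/p) :=
        ENNReal.rpow_le_rpow (Wcost_le_coupling p _ hπfst hπsnd) h1p
    _ = (∫⁻ z, ENNReal.ofReal (dist z.2.1 z.2.2 ^ p) ∂m) ^ (1/p) := by rw [hcost]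
    _ ≤ (∫⁻ z, ((F + G) z) ^ p ∂m) ^ (1/p) :=
        ENNReal.rpow_le_rpow (lintegral_mono hpt) h1p
    _ ≤ (∫⁻ z, F z ^ p ∂m) ^ (1/p) + (∫⁻ z, G z ^ p ∂m) ^ (1/p) :=
        ENNReal.lintegral_Lp_add_le hFmeas.aemeasurable hGmeas.aemeasurable hp
    _ = _ := by rw [hFint, hGint]

lemma Wdist_triangle (p : ℝ) (hp : 1 ≤ p) (μ κ ν : Measure X)
    [IsFiniteMeasure μ] [IsFiniteMeasure κ] :
    Wdist p μ ν ≤ Wdist p μ κ + Wdist p κ ν := by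
  have h1p : (0:ℝ) < 1/p := by positivity
  have h1 : Wdist p μ κ = sInf ((fun x => x ^ (1/p)) ''
      { c | ∃ π : Measure (X × X), π.map Prod.fst = μ ∧ π.map Prod.snd = κ ∧
        c = ∫⁻ z, ENNReal.ofReal (dist z.1 z.2 ^ p) ∂π }) := by
    rw [Wdist, Wcost, ennreal_rpow_sInf h1p]
  have h2 : Wdist p κ ν = sInf ((fun x => x ^ (1/p)) ''
      { c | ∃ π : Measure (X × X), π.map Prod.fst = κ ∧ π.map Prod.snd = ν ∧
        c = ∫⁻ z, ENNReal.ofReal (dist z.1 z.2 ^ p) ∂π }) := by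
    rw [Wdist, Wcost, ennreal_rpow_sInf h1p]
  rw [h1, h2]
  apply le_sInf_add_sInf
  rintro a ⟨c₁, ⟨π₁, h11, h12, rfl⟩, rfl⟩ b ⟨c₂, ⟨π₂, h21, h22, rfl⟩, rfl⟩
  exact Wdist_le_coupling_add p hp h11 h12 h21 h22

end Triangle

end Helpers

section Finiteness

lemma ennreal_add_rpow_le {p : ℝ} (hp : 0 ≤ p) (x y : ℝ≥0∞) :
    (x + y) ^ p ≤ (2:ℝ≥0∞) ^ p * (x ^ p + y ^ p) := by
  have h1 : x + y ≤ 2 * (x ⊔ y) := by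
    rw [two_mul]
    exact add_le_add le_sup_left le_sup_right
  calc (x + y) ^ p ≤ (2 * (x ⊔ y)) ^ p := ENNReal.rpow_le_rpow h1 hp
    _ = (2:ℝ≥0∞) ^ p * (x ⊔ y) ^ p := ENNReal.mul_rpow_of_nonneg _ _ hp
    _ ≤ (2:ℝ≥0∞) ^ p * (x ^ p + y ^ p) := by
        apply mul_le_mul_right
        rcases le_total x y with h | h
        · rw [sup_eq_right.2 h]; exact le_add_self
        · rw [sup_eq_left.2 h]; exact le_self_add

lemma Wcost_lt_top {X : Type*} [MeasurableSpace X] [NormedAddCommGroup X]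
    [SecondCountableTopology X] [OpensMeasurableSpace X]
    (p : ℝ) (hp : 1 ≤ p) (μ ν : Measure X) [IsFiniteMeasure μ] [IsFiniteMeasure ν]
    (hmass : μ Set.univ = ν Set.univ) (hpos : ν Set.univ ≠ 0)
    (hμ : ∫⁻ x, ENNReal.ofReal (‖x‖ ^ p) ∂μ ≠ ∞)
    (hν : ∫⁻ x, ENNReal.ofReal (‖x‖ ^ p) ∂ν ≠ ∞) :
    Wcost p μ ν < ∞ := by
  have hp0 : (0:ℝ) < p := lt_of_lt_of_le one_pos hp
  set c := (ν Set.univ)⁻¹ with hcdef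
  have hνfin : ν Set.univ ≠ ∞ := measure_ne_top ν _
  have hfst : (c • μ.prod ν).map Prod.fst = μ := by
    rw [Measure.map_smul, Measure.map_fst_prod, smul_smul, hcdef,
      ENNReal.inv_mul_cancel hpos hνfin, one_smul]
  have hsnd : (c • μ.prod ν).map Prod.snd = ν := by
    rw [Measure.map_smul, Measure.map_snd_prod, smul_smul, hcdef, hmass,
      ENNReal.inv_mul_cancel hpos hνfin, one_smul]
  refine lt_of_le_of_lt (Wcost_le_coupling p _ hfst hsnd) ?_
  rw [lintegral_smul_measure]
  have hbound : ∀ z : X × X, ENNReal.ofReal (dist z.1 z.2 ^ p)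
      ≤ (2:ℝ≥0∞) ^ p * (ENNReal.ofReal (‖z.1‖ ^ p) + ENNReal.ofReal (‖z.2‖ ^ p)) := by
    intro z
    have h1 : dist z.1 z.2 ≤ ‖z.1‖ + ‖z.2‖ := by
      rw [dist_eq_norm]; exact norm_sub_le _ _
    calc ENNReal.ofReal (dist z.1 z.2 ^ p)
        ≤ ENNReal.ofReal ((‖z.1‖ + ‖z.2‖) ^ p) :=
          ENNReal.ofReal_le_ofReal (Real.rpow_le_rpow dist_nonneg h1 hp0.le)
      _ = (ENNReal.ofReal (‖z.1‖ + ‖z.2‖)) ^ p :=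
          (ENNReal.ofReal_rpow_of_nonneg (by positivity) hp0.le).symm
      _ = (ENNReal.ofReal ‖z.1‖ + ENNReal.ofReal ‖z.2‖) ^ p := by
          rw [ENNReal.ofReal_add (norm_nonneg _) (norm_nonneg _)]
      _ ≤ (2:ℝ≥0∞) ^ p * ((ENNReal.ofReal ‖z.1‖) ^ p + (ENNReal.ofReal ‖z.2‖) ^ p) :=
          ennreal_add_rpow_le hp0.le _ _
      _ = (2:ℝ≥0∞) ^ p * (ENNReal.ofReal (‖z.1‖ ^ p) + ENNReal.ofReal (‖z.2‖ ^ p)) := by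
          rw [ENNReal.ofReal_rpow_of_nonneg (norm_nonneg _) hp0.le,
            ENNReal.ofReal_rpow_of_nonneg (norm_nonneg _) hp0.le]
  have hm1 : Measurable fun x : X => ENNReal.ofReal (‖x‖ ^ p) :=
    (continuous_norm.rpow_const fun _ => Or.inr hp0.le).measurable.ennreal_ofReal
  have hint : ∫⁻ z, ENNReal.ofReal (dist z.1 z.2 ^ p) ∂(μ.prod ν)
      ≤ (2:ℝ≥0∞) ^ p * ((ν Set.univ) * ∫⁻ x, ENNReal.ofReal (‖x‖ ^ p) ∂μ
          + (μ Set.univ) * ∫⁻ x, ENNReal.ofReal (‖x‖ ^ p) ∂ν) := by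
    calc ∫⁻ z, ENNReal.ofReal (dist z.1 z.2 ^ p) ∂(μ.prod ν)
        ≤ ∫⁻ z, (2:ℝ≥0∞) ^ p * (ENNReal.ofReal (‖z.1‖ ^ p) + ENNReal.ofReal (‖z.2‖ ^ p))
            ∂(μ.prod ν) := lintegral_mono hbound
      _ = (2:ℝ≥0∞) ^ p * ∫⁻ z, (ENNReal.ofReal (‖z.1‖ ^ p) + ENNReal.ofReal (‖z.2‖ ^ p))
            ∂(μ.prod ν) :=
          lintegral_const_mul _ ((hm1.comp measurable_fst).add (hm1.comp measurable_snd))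
      _ = (2:ℝ≥0∞) ^ p * ((∫⁻ z, ENNReal.ofReal (‖z.1‖ ^ p) ∂(μ.prod ν))
            + ∫⁻ z, ENNReal.ofReal (‖z.2‖ ^ p) ∂(μ.prod ν)) := by
          rw [lintegral_add_left (f := fun z : X × X => ENNReal.ofReal (‖z.1‖ ^ p))
            (hm1.comp measurable_fst)]
      _ = _ := by
          rw [show ∫⁻ z : X × X, ENNReal.ofReal (‖z.1‖ ^ p) ∂(μ.prod ν)
              = ∫⁻ x, ENNReal.ofReal (‖x‖ ^ p) ∂((μ.prod ν).map Prod.fst) from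
            (lintegral_map hm1 measurable_fst).symm,
            show ∫⁻ z : X × X, ENNReal.ofReal (‖z.2‖ ^ p) ∂(μ.prod ν)
              = ∫⁻ x, ENNReal.ofReal (‖x‖ ^ p) ∂((μ.prod ν).map Prod.snd) from
            (lintegral_map hm1 measurable_snd).symm,
            Measure.map_fst_prod, Measure.map_snd_prod,
            lintegral_smul_measure, lintegral_smul_measure, smul_eq_mul, smul_eq_mul]
  have h2top : (2:ℝ≥0∞) ^ p ≠ ∞ :=
    (ENNReal.rpow_lt_top_of_nonneg hp0.le (by simp)).ne
  have hctop : c ≠ ∞ := ENNReal.inv_ne_top.2 hpos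
  refine ENNReal.mul_lt_top hctop.lt_top ?_
  refine lt_of_le_of_lt hint ?_
  refine ENNReal.mul_lt_top h2top.lt_top ?_
  refine ENNReal.add_lt_top.2 ⟨?_, ?_⟩
  · exact ENNReal.mul_lt_top hνfin.lt_top hμ.lt_top
  · exact ENNReal.mul_lt_top (measure_ne_top μ _).lt_top hν.lt_top

end Finiteness


/-- For finite measures `μ, λ` on a Borel set `Ω ⊆ ℝ^d` of equal positive mass
and finite `p`-th moments, `W_p(μ,λ) ≤ 2^{-1/p} (W_p(μ,λ) + W_p(μ+λ, 2λ))`;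
consequently `W_p(μ,λ) ≤ (2^{1/p}/(2^{1/p}-1)) W_p(μ+λ, 2λ)`. -/
theorem Wdist_le_Wdist_add_self (d : ℕ) (p : ℝ) (hp : 1 ≤ p)
    (Ω : Set (EuclideanSpace ℝ (Fin d))) (hΩ : MeasurableSet Ω)
    (μ lam : Measure (EuclideanSpace ℝ (Fin d)))
    (hμfin : IsFiniteMeasure μ) (hlamfin : IsFiniteMeasure lam)
    (hμΩ : μ Ωᶜ = 0) (hlamΩ : lam Ωᶜ = 0)
    (hmass : μ Set.univ = lam Set.univ) (hpos : 0 < μ Set.univ)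
    (hμmom : ∫⁻ x, ENNReal.ofReal (‖x‖ ^ p) ∂μ ≠ ∞)
    (hlammom : ∫⁻ x, ENNReal.ofReal (‖x‖ ^ p) ∂lam ≠ ∞) :
    Wdist p μ lam
        ≤ ENNReal.ofReal (2 ^ (-(1 / p) : ℝ)) * (Wdist p μ lam + Wdist p (μ + lam) ((2 : ℝ≥0∞) • lam))
      ∧ Wdist p μ lam
        ≤ ENNReal.ofReal ((2 : ℝ) ^ ((1 / p) : ℝ) / ((2 : ℝ) ^ ((1 / p) : ℝ) - 1)) *
            Wdist p (μ + lam) ((2 : ℝ≥0∞) • lam) := by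
  have hp0 : (0:ℝ) < p := lt_of_lt_of_le one_pos hp
  have h1p : (0:ℝ) < 1/p := by positivity
  haveI : IsFiniteMeasure ((2:ℝ≥0∞) • lam) := by
    constructor
    rw [Measure.smul_apply, smul_eq_mul]
    exact ENNReal.mul_lt_top (by simp) (measure_lt_top lam _)
  haveI : IsFiniteMeasure ((2:ℝ≥0∞) • μ) := by
    constructor
    rw [Measure.smul_apply, smul_eq_mul]
    exact ENNReal.mul_lt_top (by simp) (measure_lt_top μ _)
  set W := Wdist p μ lam with hWdef
  set A := Wdist p (μ + lam) ((2:ℝ≥0∞) • lam) with hAdef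
  have step1 : Wcost p ((2:ℝ≥0∞) • μ) (μ + lam) ≤ Wcost p μ lam := by
    rw [two_smul ℝ≥0∞ μ]
    calc Wcost p (μ + μ) (μ + lam) ≤ Wcost p μ μ + Wcost p μ lam := Wcost_add_le p μ μ μ lam
      _ = Wcost p μ lam := by rw [Wcost_self p hp0, zero_add]
  have step1' : Wdist p ((2:ℝ≥0∞) • μ) (μ + lam) ≤ W := ENNReal.rpow_le_rpow step1 h1p.le
  have tri := Wdist_triangle p hp ((2:ℝ≥0∞) • μ) (μ + lam) ((2:ℝ≥0∞) • lam)
  have step2 : Wdist p ((2:ℝ≥0∞) • μ) ((2:ℝ≥0∞) • lam) ≤ W + A :=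
    tri.trans (add_le_add step1' le_rfl)
  have step3 : (2:ℝ≥0∞) ^ ((1:ℝ)/p) * W ≤ Wdist p ((2:ℝ≥0∞) • μ) ((2:ℝ≥0∞) • lam) := by
    have h := le_Wcost_smul p 2 (by norm_num) (by norm_num) μ lam
    calc (2:ℝ≥0∞) ^ ((1:ℝ)/p) * W = (2 * Wcost p μ lam) ^ ((1:ℝ)/p) := by
          rw [ENNReal.mul_rpow_of_nonneg _ _ h1p.le, hWdef]
          rfl
      _ ≤ (Wcost p ((2:ℝ≥0∞) • μ) ((2:ℝ≥0∞) • lam)) ^ ((1:ℝ)/p) :=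
          ENNReal.rpow_le_rpow h h1p.le
  have key : (2:ℝ≥0∞) ^ ((1:ℝ)/p) * W ≤ W + A := step3.trans step2
  constructor
  · have hofReal : ENNReal.ofReal ((2:ℝ) ^ (-(1/p):ℝ)) = (2:ℝ≥0∞) ^ (-(1/p):ℝ) := by
      rw [← ENNReal.ofReal_rpow_of_pos (by norm_num : (0:ℝ) < 2)]
      norm_num
    rw [hofReal]
    calc W = (2:ℝ≥0∞) ^ (-(1/p):ℝ) * ((2:ℝ≥0∞) ^ ((1:ℝ)/p) * W) := by
          rw [← mul_assoc, ← ENNReal.rpow_add _ _ (by norm_num) (by norm_num)]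
          simp
      _ ≤ (2:ℝ≥0∞) ^ (-(1/p):ℝ) * (W + A) := mul_le_mul_right key _
  · have hlampos : lam Set.univ ≠ 0 := by rw [← hmass]; exact hpos.ne'
    have hWfin : W ≠ ∞ := by
      have hco := Wcost_lt_top p hp μ lam hmass hlampos hμmom hlammom
      exact (ENNReal.rpow_lt_top_of_nonneg h1p.le hco.ne).ne
    set cE := (2:ℝ≥0∞) ^ ((1:ℝ)/p) with hcEdef
    have hcE_lt : 1 < cE := by
      rw [hcEdef]
      calc (1:ℝ≥0∞) = 2 ^ (0:ℝ) := by simp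
        _ < 2 ^ ((1:ℝ)/p) := ENNReal.rpow_lt_rpow_of_exponent_lt (by norm_num) (by simp) h1p
    have hcEtop : cE ≠ ∞ := (ENNReal.rpow_lt_top_of_nonneg h1p.le (by simp)).ne
    have hsub : (cE - 1) * W ≤ A := by
      have e1 : (cE - 1) * W + W = cE * W := by
        have h2 : (cE - 1) * W + W = ((cE - 1) + 1) * W := by ring
        rw [h2, tsub_add_cancel_of_le hcE_lt.le]
      have h' : (cE - 1) * W + W ≤ A + W := by
        rw [e1]
        exact key.trans (le_of_eq (add_comm W A))
      exact (ENNReal.add_le_add_iff_right hWfin).1 h'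
    have hc10 : cE - 1 ≠ 0 := by
      simp only [ne_eq, tsub_eq_zero_iff_le]
      exact hcE_lt.not_ge
    have hc1top : cE - 1 ≠ ∞ := (lt_of_le_of_lt tsub_le_self hcEtop.lt_top).ne
    have hWle : W ≤ (cE - 1)⁻¹ * A := by
      calc W = (cE - 1)⁻¹ * ((cE - 1) * W) := by
            rw [← mul_assoc, ENNReal.inv_mul_cancel hc10 hc1top, one_mul]
        _ ≤ (cE - 1)⁻¹ * A := mul_le_mul_right hsub _
    have h2r : (1:ℝ) < (2:ℝ) ^ ((1:ℝ)/p) := by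
      have := Real.rpow_lt_rpow_of_exponent_lt (x := 2) (by norm_num) h1p
      simpa using this
    have hconst : ENNReal.ofReal ((2:ℝ) ^ ((1/p):ℝ) / ((2:ℝ) ^ ((1/p):ℝ) - 1))
        = cE * (cE - 1)⁻¹ := by
      rw [ENNReal.ofReal_div_of_pos (by linarith), ENNReal.ofReal_sub _ (by norm_num : (0:ℝ) ≤ 1),
        ← ENNReal.ofReal_rpow_of_pos (by norm_num : (0:ℝ) < 2)]
      rw [hcEdef]
      norm_num [div_eq_mul_inv, one_div]
    rw [hconst]
    refine hWle.trans ?_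
    exact mul_le_mul_left (le_mul_of_one_le_left zero_le hcE_lt.le) A
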